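/- Let c₁,…,cₙ ∈ ℂ and σ₁,…,σₙ ∈ ℝ pairwise distinct, with n ≥ 1, and suppose the function E(y) = Σ_{j=1}^n c_j y^{iσ_j} (y > 0) is not constant (equivalently, c_j ≠ 0 and σ_j ≠ 0 for some j). Then there exist δ > 0 and two sequences (y_{1,m}), (y_{2,m}) both tending to +∞ such that |E(y_{1,m}) − E(y_{2,m})| ≥ δ for all m. In particular, E(y) has no limit as y → +∞. -/

import Mathlib

open Complex Filter Finset

/-- The additive character `t ↦ exp(I σ t)` as a monoid hom on `Multiplicative ℝ`. -/
noncomputable def stmt18.char (s : ℝ) : Multiplicative ℝ →* ℂ where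
  toFun t := Complex.exp (Complex.I * s * (Multiplicative.toAdd t : ℝ))
  map_one' := by simp
  map_mul' x y := by
    show Complex.exp (Complex.I * s * ((Multiplicative.toAdd x + Multiplicative.toAdd y : ℝ) : ℂ))
      = Complex.exp (Complex.I * s * (Multiplicative.toAdd x : ℝ))
        * Complex.exp (Complex.I * s * (Multiplicative.toAdd y : ℝ))
    rw [← Complex.exp_add]
    push_cast
    ring_nf

lemma stmt18.char_injective : Function.Injective stmt18.char := by
  intro s s' h
  by_contra hne
  have hd : s - s' ≠ 0 := sub_ne_zero.mpr hne
  have := DFunLike.congr_fun h (Multiplicative.ofAdd (Real.pi / (s - s')))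
  simp only [stmt18.char, MonoidHom.coe_mk, OneHom.coe_mk, toAdd_ofAdd] at this
  have h1 : Complex.exp (Complex.I * (s - s') * (Real.pi / (s - s') : ℝ)) = 1 := by
    rw [show (Complex.I * (s - s') * (Real.pi / (s - s') : ℝ)) =
        Complex.I * s * (Real.pi / (s - s') : ℝ) - Complex.I * s' * (Real.pi / (s - s') : ℝ) by
      push_cast; ring]
    rw [Complex.exp_sub, this, div_self (Complex.exp_ne_zero _)]
  have h2 : (Complex.I * (s - s') * (Real.pi / (s - s') : ℝ)) = Real.pi * Complex.I := by
    have : ((s : ℂ) - s') ≠ 0 := by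
      simpa using (Complex.ofReal_ne_zero.mpr hd)
    push_cast
    field_simp
  rw [h2, Complex.exp_pi_mul_I] at h1
  norm_num at h1

/-- If the trig polynomial is constant then all coefficients with nonzero frequency vanish. -/
lemma stmt18.const_coeff {n : ℕ} (c : Fin n → ℂ) (σ : Fin n → ℝ)
    (hσ : Function.Injective σ)
    (hconst : ∀ t : ℝ, (∑ j, c j * Complex.exp (Complex.I * σ j * t)) =
      ∑ j, c j * Complex.exp (Complex.I * σ j * (0 : ℝ))) :
    ∀ j, σ j ≠ 0 → c j = 0 := by
  classical
  intro j₀ hj₀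
  set C : ℂ := ∑ j, c j * Complex.exp (Complex.I * σ j * (0 : ℝ)) with hC
  set s : Finset (Multiplicative ℝ →* ℂ) :=
    (Finset.univ.image (fun j => stmt18.char (σ j))) ∪ {1} with hs
  set g : (Multiplicative ℝ →* ℂ) → ℂ := fun φ =>
    (∑ j ∈ Finset.univ.filter (fun j => stmt18.char (σ j) = φ), c j)
      - (if φ = 1 then C else 0) with hg
  have hsum : (∑ φ ∈ s, g φ • (φ : Multiplicative ℝ → ℂ)) = 0 := by
    funext t
    simp only [Finset.sum_apply, Pi.smul_apply, smul_eq_mul, hg, Pi.zero_apply]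
    rw [Finset.sum_congr rfl (fun φ _ => sub_mul _ _ _), Finset.sum_sub_distrib]
    have h1 : (∑ φ ∈ s, (∑ j ∈ Finset.univ.filter (fun j => stmt18.char (σ j) = φ), c j) * φ t)
        = ∑ j, c j * stmt18.char (σ j) t := by
      rw [← Finset.sum_fiberwise_of_maps_to (t := s) (g := fun j => stmt18.char (σ j))
        (fun j _ => by simp [hs]) (fun j => c j * stmt18.char (σ j) t)]
      refine Finset.sum_congr rfl fun φ _ => ?_
      rw [Finset.sum_mul]
      exact Finset.sum_congr rfl fun j hj => by
        rw [(Finset.mem_filter.mp hj).2]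
    have h2 : (∑ φ ∈ s, (if φ = 1 then C else 0) * φ t) = C := by
      rw [Finset.sum_eq_single (1 : Multiplicative ℝ →* ℂ)]
      · simp
      · intro b _ hb; simp [hb]
      · intro h; exact absurd (by simp [hs]) h
    rw [h1, h2]
    have := hconst (Multiplicative.toAdd t)
    simp only [stmt18.char, MonoidHom.coe_mk, OneHom.coe_mk]
    rw [this, sub_self]
  have hli := linearIndependent_iff'.mp
    (linearIndependent_monoidHom (Multiplicative ℝ) ℂ) s g hsum
  have hmem : stmt18.char (σ j₀) ∈ s := by simp [hs]
  have h0 := hli _ hmem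
  have hne1 : stmt18.char (σ j₀) ≠ 1 := by
    intro h
    exact hj₀ (stmt18.char_injective (h.trans (by
      have : stmt18.char 0 = 1 := by
        ext t; simp [stmt18.char]
      exact this.symm)))
  rw [hg] at h0
  simp only [hne1, if_neg, if_false, sub_zero] at h0
  have hfilt : Finset.univ.filter (fun j => stmt18.char (σ j) = stmt18.char (σ j₀)) = {j₀} := by
    ext b
    simp only [Finset.mem_filter, Finset.mem_univ, true_and, Finset.mem_singleton]
    exact ⟨fun hb => hσ (stmt18.char_injective hb), fun hb => by rw [hb]⟩
  rw [hfilt, Finset.sum_singleton] at h0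
  exact h0

/-- Recurrence: arbitrarily large almost-periods. -/
lemma stmt18.recur {n : ℕ} (σ : Fin n → ℝ) {ε : ℝ} (hε : 0 < ε) (N : ℕ) :
    ∃ τ : ℝ, (N : ℝ) ≤ τ ∧ ∀ j, ‖Complex.exp (Complex.I * σ j * τ) - 1‖ < ε := by
  classical
  set v : ℕ → (Fin n → ℂ) := fun m j => Complex.exp (Complex.I * σ j * (m : ℝ)) with hv
  have hnorm : ∀ (x : ℝ) (j : Fin n), ‖Complex.exp (Complex.I * σ j * (x : ℝ))‖ = 1 := by
    intro x j
    rw [Complex.norm_exp]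
    simp
  have hmem : ∀ m, v m ∈ Metric.closedBall (0 : Fin n → ℂ) 1 := by
    intro m
    rw [Metric.mem_closedBall, dist_zero_right]
    exact pi_norm_le_iff_of_nonneg zero_le_one |>.mpr fun j => le_of_eq (hnorm m j)
  obtain ⟨a, -, φ, hφ, hconv⟩ :=
    (isCompact_closedBall (0 : Fin n → ℂ) 1).tendsto_subseq hmem
  rw [Metric.tendsto_atTop] at hconv
  obtain ⟨K, hK⟩ := hconv (ε / 2) (half_pos hε)
  set k₂ : ℕ := max K (φ K + N) with hk₂
  have hK2 : K ≤ k₂ := le_max_left _ _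
  have hd : (N : ℝ) ≤ (φ k₂ : ℝ) - (φ K : ℝ) := by
    have h1 : φ K + N ≤ k₂ := le_max_right _ _
    have h2 : k₂ ≤ φ k₂ := hφ.le_apply
    have : φ K + N ≤ φ k₂ := h1.trans h2
    have := (Nat.cast_le (α := ℝ)).mpr this
    push_cast at this ⊢
    linarith
  refine ⟨(φ k₂ : ℝ) - (φ K : ℝ), hd, fun j => ?_⟩
  have hdist : dist (v (φ k₂)) (v (φ K)) < ε :=
    calc dist (v (φ k₂)) (v (φ K)) ≤ dist (v (φ k₂)) a + dist (v (φ K)) a :=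
          dist_triangle_right _ _ _
      _ < ε / 2 + ε / 2 := add_lt_add (hK k₂ hK2) (hK K le_rfl)
      _ = ε := add_halves ε
  have hj : ‖v (φ k₂) j - v (φ K) j‖ < ε :=
    lt_of_le_of_lt (by simpa [dist_eq_norm] using dist_le_pi_dist (v (φ k₂)) (v (φ K)) j) hdist
  have hmul : Complex.exp (Complex.I * σ j * (((φ k₂ : ℝ) - (φ K : ℝ) : ℝ) : ℂ))
      * Complex.exp (Complex.I * σ j * ((φ K : ℕ) : ℝ)) =
      Complex.exp (Complex.I * σ j * ((φ k₂ : ℕ) : ℝ)) := by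
    rw [← Complex.exp_add]
    push_cast
    ring_nf
  have key : Complex.exp (Complex.I * σ j * ((φ k₂ : ℝ) - (φ K : ℝ) : ℝ)) - 1
      = (v (φ k₂) j - v (φ K) j) / v (φ K) j := by
    simp only [hv]
    rw [eq_div_iff (Complex.exp_ne_zero _), sub_mul, one_mul, hmul]
  rw [key, norm_div]
  simp only [hv]
  rw [hnorm _ j, div_one]
  exact hj

theorem stmt18 (n : ℕ) (hn : 1 ≤ n) (c : Fin n → ℂ) (σ : Fin n → ℝ)
    (hσ : Function.Injective σ) (hex : ∃ j, c j ≠ 0 ∧ σ j ≠ 0) :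
    (∃ δ > (0 : ℝ), ∃ y₁ y₂ : ℕ → ℝ,
      Filter.Tendsto y₁ Filter.atTop Filter.atTop ∧
      Filter.Tendsto y₂ Filter.atTop Filter.atTop ∧
      ∀ m, δ ≤ ‖(∑ j, c j * Complex.exp (Complex.I * (σ j : ℂ) * (Real.log (y₁ m) : ℂ))) -
        (∑ j, c j * Complex.exp (Complex.I * (σ j : ℂ) * (Real.log (y₂ m) : ℂ)))‖) ∧
    ∀ L : ℂ, ¬ Filter.Tendsto
      (fun y : ℝ => ∑ j, c j * Complex.exp (Complex.I * (σ j : ℂ) * (Real.log y : ℂ)))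
      Filter.atTop (nhds L) := by
  classical
  set f : ℝ → ℂ := fun t => ∑ j, c j * Complex.exp (Complex.I * σ j * t) with hf
  -- f is not constant
  have hnc : ∃ t₁ t₂ : ℝ, f t₁ ≠ f t₂ := by
    by_contra h
    push_neg at h
    obtain ⟨j, hcj, hsj⟩ := hex
    exact hcj (stmt18.const_coeff c σ hσ (fun t => h t 0) j hsj)
  obtain ⟨t₁, t₂, hne⟩ := hnc
  set D : ℝ := ‖f t₁ - f t₂‖ with hD
  have hDpos : 0 < D := norm_pos_iff.mpr (sub_ne_zero.mpr hne)
  set Cn : ℝ := ∑ j, ‖c j‖ with hCn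
  have hCn0 : 0 ≤ Cn := Finset.sum_nonneg fun j _ => norm_nonneg _
  set ε : ℝ := D / (4 * (Cn + 1)) with hε
  have hεpos : 0 < ε := div_pos hDpos (by linarith)
  -- choose almost periods
  have hτ : ∀ m : ℕ, ∃ τ : ℝ, (m : ℝ) ≤ τ ∧
      ∀ j, ‖Complex.exp (Complex.I * σ j * τ) - 1‖ < ε :=
    fun m => stmt18.recur σ hεpos m
  choose τ hτge hτsmall using hτ
  -- the key perturbation bound
  have hpert : ∀ (t : ℝ) (m : ℕ), ‖f (t + τ m) - f t‖ ≤ D / 4 := by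
    intro t m
    have hrw : f (t + τ m) - f t
        = ∑ j, c j * Complex.exp (Complex.I * σ j * t)
            * (Complex.exp (Complex.I * σ j * (τ m : ℝ)) - 1) := by
      rw [hf]
      simp only [← Finset.sum_sub_distrib]
      refine Finset.sum_congr rfl fun j _ => ?_
      have : Complex.exp (Complex.I * σ j * ((t + τ m : ℝ) : ℂ))
          = Complex.exp (Complex.I * σ j * t) * Complex.exp (Complex.I * σ j * (τ m : ℝ)) := by
        rw [← Complex.exp_add]; push_cast; ring_nf
      rw [this]; ring
    rw [hrw]
    calc ‖∑ j, c j * Complex.exp (Complex.I * σ j * t)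
            * (Complex.exp (Complex.I * σ j * (τ m : ℝ)) - 1)‖
        ≤ ∑ j, ‖c j * Complex.exp (Complex.I * σ j * t)
            * (Complex.exp (Complex.I * σ j * (τ m : ℝ)) - 1)‖ := norm_sum_le _ _
      _ ≤ ∑ j, ‖c j‖ * ε := by
          refine Finset.sum_le_sum fun j _ => ?_
          rw [norm_mul, norm_mul]
          have h1 : ‖Complex.exp (Complex.I * σ j * (t : ℂ))‖ = 1 := by
            rw [Complex.norm_exp]; simp
          rw [h1, mul_one]
          exact mul_le_mul_of_nonneg_left (le_of_lt (hτsmall m j)) (norm_nonneg _)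
      _ = Cn * ε := by rw [← Finset.sum_mul]
      _ ≤ D / 4 := by
          have h4 : (0:ℝ) < 4 * (Cn + 1) := by linarith
          rw [hε, mul_div_assoc'] 
          rw [div_le_div_iff₀ h4 (by norm_num : (0:ℝ) < 4)]
          nlinarith
  set y₁ : ℕ → ℝ := fun m => Real.exp (t₁ + τ m) with hy₁
  set y₂ : ℕ → ℝ := fun m => Real.exp (t₂ + τ m) with hy₂
  have hlog₁ : ∀ m, Real.log (y₁ m) = t₁ + τ m := fun m => Real.log_exp _
  have hlog₂ : ∀ m, Real.log (y₂ m) = t₂ + τ m := fun m => Real.log_exp _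
  have htend : ∀ t : ℝ, Filter.Tendsto (fun m : ℕ => Real.exp (t + τ m)) atTop atTop := by
    intro t
    refine Real.tendsto_exp_atTop.comp ?_
    exact tendsto_atTop_mono (f := fun m : ℕ => t + (m : ℝ))
      (fun m => add_le_add_right (hτge m) t)
      (tendsto_atTop_add_const_left _ t tendsto_natCast_atTop_atTop)
  have hsep : ∀ m, D / 2 ≤ ‖f (Real.log (y₁ m)) - f (Real.log (y₂ m))‖ := by
    intro m
    rw [hlog₁, hlog₂]
    have h1 := hpert t₁ m
    have h2 := hpert t₂ m
    have : D ≤ ‖f (t₁ + τ m) - f (t₂ + τ m)‖ + D / 4 + D / 4 := by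
      calc D = ‖f t₁ - f t₂‖ := hD
        _ = ‖(f t₁ - f (t₁ + τ m)) + (f (t₁ + τ m) - f (t₂ + τ m)) + (f (t₂ + τ m) - f t₂)‖ := by
            ring_nf
        _ ≤ ‖f t₁ - f (t₁ + τ m)‖ + ‖f (t₁ + τ m) - f (t₂ + τ m)‖ + ‖f (t₂ + τ m) - f t₂‖ :=
            norm_add₃_le
        _ ≤ D / 4 + ‖f (t₁ + τ m) - f (t₂ + τ m)‖ + D / 4 := by
            have h1' : ‖f t₁ - f (t₁ + τ m)‖ ≤ D / 4 := by rw [norm_sub_rev]; exact h1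
            gcongr
        _ = ‖f (t₁ + τ m) - f (t₂ + τ m)‖ + D / 4 + D / 4 := by ring
    linarith
  have main : (∃ δ > (0 : ℝ), ∃ y₁ y₂ : ℕ → ℝ,
      Filter.Tendsto y₁ Filter.atTop Filter.atTop ∧
      Filter.Tendsto y₂ Filter.atTop Filter.atTop ∧
      ∀ m, δ ≤ ‖(∑ j, c j * Complex.exp (Complex.I * (σ j : ℂ) * (Real.log (y₁ m) : ℂ))) -
        (∑ j, c j * Complex.exp (Complex.I * (σ j : ℂ) * (Real.log (y₂ m) : ℂ)))‖) :=
    ⟨D / 2, half_pos hDpos, y₁, y₂, htend t₁, htend t₂, hsep⟩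
  refine ⟨main, ?_⟩
  intro L hL
  obtain ⟨δ, hδpos, z₁, z₂, hz₁, hz₂, hδ⟩ := main
  have h1 : Filter.Tendsto (fun m => f (Real.log (z₁ m))) atTop (nhds L) := hL.comp hz₁
  have h2 : Filter.Tendsto (fun m => f (Real.log (z₂ m))) atTop (nhds L) := hL.comp hz₂
  have h3 : Filter.Tendsto (fun m => f (Real.log (z₁ m)) - f (Real.log (z₂ m))) atTop
      (nhds (L - L)) := h1.sub h2
  rw [sub_self] at h3
  have h4 := h3.norm
  rw [norm_zero] at h4
  have := (h4.eventually (eventually_lt_nhds hδpos)).exists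
  obtain ⟨m, hm⟩ := this
  exact absurd (hδ m) (not_le.mpr hm)
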